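/- Assume G has no cycle of length shorter than g, where g is an even integer, that ρ satisfies 1 ≤ ρ < 1/(1−Δ), that for every integer d ≥ 1 and every pair of vertices x, y of G the number of simple paths of length d from x to y is at most ρ^d, and that g ≥ 2⌈(2 log(Δ/2) + log(1−ρ(1−Δ))) / log(ρ(1−Δ))⌉. Then for any pair of non-adjacent vertices u, v of G with graph distance 1 < d(u,v) < g/2, there exists a vertex w ∉ {u,v} such that the probability that v ∈ A(u) and w ∉ A(u) is at most Δ²/4. -/

import Mathlib

open MeasureTheory ProbabilityTheory

/-- A walk is *active* if every dart `(a,b)` it traverses has its event `X (a,b)` occurring. -/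
def SimpleGraph.Walk.Active {V : Type*} {G : SimpleGraph V} {Ω : Type*}
    (X : V × V → Set Ω) {u v : V} (p : G.Walk u v) (ω : Ω) : Prop :=
  ∀ d ∈ p.darts, ω ∈ X d.toProd

/-- The infected set with seed `u`: `u` itself together with every vertex reachable
from `u` by an active path. -/
def SimpleGraph.infected {V : Type*} (G : SimpleGraph V) {Ω : Type*}
    (X : V × V → Set Ω) (u : V) (ω : Ω) : Set V :=
  {w | w = u ∨ ∃ p : G.Walk u w, p.IsPath ∧ p.Active X ω}

namespace SimpleGraph

lemma aux_exists_adj_of_mem_support {V : Type*} {H : SimpleGraph V} {a b : V}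
    (c : H.Walk a b) (hc : ¬ c.Nil) : ∀ y ∈ c.support, ∃ z, H.Adj y z := by
  induction c with
  | nil => simp at hc
  | @cons x x' y h p ih =>
    intro s hs
    rw [Walk.support_cons, List.mem_cons] at hs
    rcases hs with rfl | hs
    · exact ⟨_, h⟩
    · by_cases hnil : p.Nil
      · cases p with
        | nil =>
          simp only [Walk.support_nil, List.mem_singleton] at hs
          subst hs; exact ⟨_, h.symm⟩
        | cons h' p' => simp at hnil
      · exact ih hnil s hs

lemma aux_exists_cycle_of_two_paths {V : Type*} {G : SimpleGraph V} {u v : V}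
    (p q : G.Walk u v) (hp : p.IsPath) (hq : q.IsPath) (hne : p ≠ q) :
    ∃ (x : V) (c : G.Walk x x), c.IsCycle ∧
      ∀ y ∈ c.support, y ∈ p.support ∨ y ∈ q.support := by
  classical
  set K : G.Subgraph := p.toSubgraph ⊔ q.toSubgraph with hK
  set H : SimpleGraph V := K.spanningCoe with hH
  have hHG : H ≤ G := K.spanningCoe_le
  have hKadj : ∀ {y z : V}, H.Adj y z → K.Adj y z := fun h => h
  have hpe : ∀ e ∈ p.edges, e ∈ H.edgeSet := by
    intro e he
    have h1 : e ∈ p.toSubgraph.edgeSet := p.mem_edges_toSubgraph.mpr he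
    have h2 : e ∈ K.edgeSet := Subgraph.edgeSet_mono le_sup_left h1
    induction e using Sym2.ind with
    | _ a b' => exact (Subgraph.mem_edgeSet.mp h2 : K.Adj a b')
  have hqe : ∀ e ∈ q.edges, e ∈ H.edgeSet := by
    intro e he
    have h1 : e ∈ q.toSubgraph.edgeSet := q.mem_edges_toSubgraph.mpr he
    have h2 : e ∈ K.edgeSet := Subgraph.edgeSet_mono le_sup_right h1
    induction e using Sym2.ind with
    | _ a b' => exact (Subgraph.mem_edgeSet.mp h2 : K.Adj a b')
  by_cases hac : H.IsAcyclic
  · exfalso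
    have hup : (⟨p.transfer H hpe, hp.transfer hpe⟩ : H.Path u v)
        = ⟨q.transfer H hqe, hq.transfer hqe⟩ :=
      isAcyclic_iff_path_unique.mp hac _ _
    have h2 : p.transfer H hpe = q.transfer H hqe := Subtype.ext_iff.mp hup
    apply hne
    have h3 := congrArg (fun r : H.Walk u v =>
      r.transfer G (fun e he => edgeSet_mono hHG (r.edges_subset_edgeSet he))) h2
    simpa [Walk.transfer_transfer, Walk.transfer_self] using h3
  · rw [IsAcyclic] at hac
    push_neg at hac
    obtain ⟨x, c, hc⟩ := hac
    refine ⟨x, c.transfer G (fun e he => edgeSet_mono hHG (c.edges_subset_edgeSet he)),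
      hc.transfer _, ?_⟩
    intro y hy
    rw [Walk.support_transfer] at hy
    have hnil : ¬ c.Nil := by
      rw [Walk.nil_iff_length_eq]
      have := hc.three_le_length
      omega
    obtain ⟨z, hyz⟩ := aux_exists_adj_of_mem_support c hnil y hy
    have : y ∈ K.verts := (hKadj hyz).fst_mem
    rw [hK, Subgraph.verts_sup] at this
    rcases this with h | h
    · exact Or.inl (p.mem_verts_toSubgraph.mp h)
    · exact Or.inr (q.mem_verts_toSubgraph.mp h)

lemma aux_cycle_length_le {V : Type*} [DecidableEq V] {G : SimpleGraph V} {u v x : V}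
    (hne : u ≠ v) {p q : G.Walk u v} (hp : p.IsPath) (hq : q.IsPath)
    {c : G.Walk x x} (hc : c.IsCycle)
    (hsub : ∀ y ∈ c.support, y ∈ p.support ∨ y ∈ q.support) :
    c.length ≤ p.length + q.length := by
  have htail : c.support.tail.Nodup := hc.support_nodup
  have hlen : c.support.tail.length = c.length := by
    have := c.length_support; simp [this]
  have hcard : c.support.tail.toFinset.card = c.length := by
    rw [List.toFinset_card_of_nodup htail, hlen]
  have hsubF : c.support.tail.toFinset ⊆ p.support.toFinset ∪ q.support.toFinset := by
    intro y hy
    rw [List.mem_toFinset] at hy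
    have := hsub y (List.mem_of_mem_tail hy)
    rw [Finset.mem_union, List.mem_toFinset, List.mem_toFinset]
    exact this
  have hA : p.support.toFinset.card = p.length + 1 := by
    rw [List.toFinset_card_of_nodup hp.support_nodup, Walk.length_support]
  have hB : q.support.toFinset.card = q.length + 1 := by
    rw [List.toFinset_card_of_nodup hq.support_nodup, Walk.length_support]
  have hinter : ({u, v} : Finset V) ⊆ p.support.toFinset ∩ q.support.toFinset := by
    intro y hy
    rw [Finset.mem_insert, Finset.mem_singleton] at hy
    rw [Finset.mem_inter, List.mem_toFinset, List.mem_toFinset]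
    rcases hy with rfl | rfl
    · exact ⟨p.start_mem_support, q.start_mem_support⟩
    · exact ⟨p.end_mem_support, q.end_mem_support⟩
  have h2 : 2 ≤ (p.support.toFinset ∩ q.support.toFinset).card := by
    have := Finset.card_le_card hinter
    rwa [Finset.card_insert_of_notMem (by simpa using hne), Finset.card_singleton] at this
  have hie := Finset.card_union_add_card_inter p.support.toFinset q.support.toFinset
  have hle := Finset.card_le_card hsubF
  omega

end SimpleGraph

lemma aux_prob_active_le {V : Type*} {G : SimpleGraph V} {Ω : Type*} [MeasureSpace Ω]
    (Δ : ℝ) (X : V × V → Set Ω)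
    (hindep : iIndepSet (fun e : {q : V × V // G.Adj q.1 q.2} => X e.1) ℙ)
    (hub : ∀ a b : V, G.Adj a b → ℙ (X (a, b)) ≤ ENNReal.ofReal (1 - Δ))
    {x y : V} (q : G.Walk x y) (hq : q.IsPath) :
    ℙ {ω | q.Active X ω} ≤ ENNReal.ofReal (1 - Δ) ^ q.length := by
  classical
  set f : G.Dart → {e : V × V // G.Adj e.1 e.2} := fun d => ⟨d.toProd, d.adj⟩ with hf
  set S : Finset {e : V × V // G.Adj e.1 e.2} := (q.darts.map f).toFinset with hS
  have hnodupd : q.darts.Nodup := by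
    have h1 : q.edges.Nodup := hq.isTrail.edges_nodup
    have h2 : q.edges = q.darts.map SimpleGraph.Dart.edge := rfl
    rw [h2] at h1
    exact h1.of_map _
  have hmapnodup : (q.darts.map f).Nodup := by
    refine hnodupd.map ?_
    intro d1 d2 h
    have h' : d1.toProd = d2.toProd := congrArg Subtype.val h
    exact SimpleGraph.Dart.ext d1 d2 h'
  have hcard : S.card = q.length := by
    rw [hS, List.toFinset_card_of_nodup hmapnodup, List.length_map,
      SimpleGraph.Walk.length_darts]
  have hset : {ω | q.Active X ω} = ⋂ i ∈ S, X i.1 := by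
    ext ω
    simp only [Set.mem_setOf_eq, Set.mem_iInter, SimpleGraph.Walk.Active, hS,
      List.mem_toFinset, List.mem_map]
    constructor
    · rintro h i ⟨d, hd, rfl⟩
      exact h d hd
    · intro h d hd
      exact h (f d) ⟨d, hd, rfl⟩
  rw [hset, hindep.meas_biInter S]
  calc ∏ i ∈ S, ℙ (X i.1) ≤ ∏ _i ∈ S, ENNReal.ofReal (1 - Δ) :=
        Finset.prod_le_prod' fun i _ => hub i.1.1 i.1.2 i.2
    _ = ENNReal.ofReal (1 - Δ) ^ q.length := by rw [Finset.prod_const, hcard]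

lemma aux_sum_geom (r : ℝ) (hr0 : 0 ≤ r) (hr1 : r < 1) (L N : ℕ) :
    ∑ ℓ ∈ Finset.Ico L N, r ^ ℓ ≤ r ^ L / (1 - r) := by
  have h1r : (0:ℝ) < 1 - r := by linarith
  rw [Finset.sum_Ico_eq_sum_range]
  simp_rw [pow_add]
  rw [← Finset.mul_sum]
  have hg : ∑ i ∈ Finset.range (N - L), r ^ i ≤ 1 / (1 - r) := by
    rw [geom_sum_eq (by intro h; rw [h] at hr1; exact lt_irrefl 1 hr1) (N - L)]
    have hrn : (0:ℝ) ≤ r ^ (N - L) := pow_nonneg hr0 _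
    have heq : (r ^ (N - L) - 1) / (r - 1) = (1 - r ^ (N - L)) / (1 - r) := by
      rw [div_eq_div_iff (sub_ne_zero.mpr (ne_of_lt hr1)) (ne_of_gt h1r)]
      ring
    rw [heq, div_le_div_iff₀ h1r h1r]
    nlinarith [hrn]
  calc r ^ L * ∑ i ∈ Finset.range (N - L), r ^ i ≤ r ^ L * (1 / (1 - r)) :=
        mul_le_mul_of_nonneg_left hg (pow_nonneg hr0 L)
    _ = r ^ L / (1 - r) := by ring

lemma aux_geom_bound (Δ ρ b : ℝ) (hΔ0 : 0 < Δ) (hΔ2 : Δ ≤ 1/2) (hρ1 : 1 ≤ ρ)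
    (hρΔ : ρ < 1/(1-Δ)) (hb : 1 < b) (L : ℕ)
    (hL : (⌈(2 * Real.logb b (Δ / 2) + Real.logb b (1 - ρ * (1 - Δ))) /
        Real.logb b (ρ * (1 - Δ))⌉ : ℤ) ≤ (L : ℤ)) :
    (ρ * (1 - Δ)) ^ L / (1 - ρ * (1 - Δ)) ≤ Δ ^ 2 / 4 := by
  set r := ρ * (1 - Δ) with hrdef
  have h1Δ : (0:ℝ) < 1 - Δ := by linarith
  have hr0 : 0 < r := mul_pos (by linarith) h1Δ
  have hr1 : r < 1 := by
    rw [lt_div_iff₀ h1Δ] at hρΔ; linarith [hρΔ]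
  have h1r : 0 < 1 - r := by linarith
  set dd := Real.logb b r with hdd
  have hddneg : dd < 0 := Real.logb_neg hb hr0 hr1
  set n0 := 2 * Real.logb b (Δ / 2) + Real.logb b (1 - r) with hn0
  set t := n0 / dd with ht
  have hLt : t ≤ (L : ℝ) := by
    refine le_trans (Int.le_ceil t) ?_
    exact_mod_cast hL
  have hmul : (L : ℝ) * dd ≤ n0 := by
    have := mul_le_mul_of_nonpos_right hLt (le_of_lt hddneg)
    rwa [ht, div_mul_cancel₀ n0 (ne_of_lt hddneg)] at this
  have hn0eq : n0 = Real.logb b ((Δ / 2) ^ 2 * (1 - r)) := by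
    rw [Real.logb_mul (by positivity) (ne_of_gt h1r), Real.logb_pow]
    push_cast
    ring
  have hLdd : (L : ℝ) * dd = Real.logb b (r ^ L) := by
    rw [Real.logb_pow, hdd]
  have hkey : r ^ L ≤ (Δ / 2) ^ 2 * (1 - r) := by
    have h1 : Real.logb b (r ^ L) ≤ Real.logb b ((Δ / 2) ^ 2 * (1 - r)) := by
      rw [← hLdd, ← hn0eq]; exact hmul
    exact (Real.logb_le_logb hb (by positivity) (by positivity)).mp h1
  rw [div_le_div_iff₀ h1r (by norm_num : (0:ℝ) < 4)] at *
  nlinarith [hkey]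

/-- under the girth / path-growth assumptions, for non-adjacent vertices
`u, v` with `1 < d(u,v) < g/2`, there is a vertex `w ∉ {u,v}` such that the probability
that `v` is infected but `w` is not infected (with seed `u`) is at most `Δ²/4`. -/
theorem prob_nonadjacent_close_exists_w
    {V : Type*} [Fintype V] (G : SimpleGraph V)
    {Ω : Type*} [MeasureSpace Ω] [IsProbabilityMeasure (ℙ : Measure Ω)]
    (Δ : ℝ) (hΔ0 : 0 < Δ) (hΔ2 : Δ ≤ 1 / 2)
    (X : V × V → Set Ω)
    (hindep : iIndepSet (fun e : {q : V × V // G.Adj q.1 q.2} => X e.1) ℙ)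
    (hbounds : ∀ a b : V, G.Adj a b →
      ENNReal.ofReal Δ ≤ ℙ (X (a, b)) ∧ ℙ (X (a, b)) ≤ ENNReal.ofReal (1 - Δ))
    (g : ℕ) (hgeven : Even g)
    (hcycle : ∀ (x : V) (c : G.Walk x x), c.IsCycle → g ≤ c.length)
    (ρ : ℝ) (hρ1 : 1 ≤ ρ) (hρΔ : ρ < 1 / (1 - Δ))
    (hpaths : ∀ d : ℕ, 1 ≤ d → ∀ x y : V,
      (Nat.card {p : G.Walk x y // p.IsPath ∧ p.length = d} : ℝ) ≤ ρ ^ d)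
    (b : ℝ) (hb : 1 < b)
    (hg : 2 * ⌈(2 * Real.logb b (Δ / 2) + Real.logb b (1 - ρ * (1 - Δ))) /
        Real.logb b (ρ * (1 - Δ))⌉ ≤ (g : ℤ))
    (u v : V) (huv : ¬ G.Adj u v) (hd1 : 1 < G.dist u v) (hd2 : 2 * G.dist u v < g) :
    ∃ w : V, w ≠ u ∧ w ≠ v ∧
      ℙ {ω | v ∈ G.infected X u ω ∧ w ∉ G.infected X u ω}
        ≤ ENNReal.ofReal (Δ ^ 2 / 4) := by
  classical
  set d := G.dist u v with hddef
  have hne_uv : u ≠ v := by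
    intro h
    rw [h, SimpleGraph.dist_self] at hddef
    omega
  have hreach : G.Reachable u v := by
    by_contra h
    have : G.dist u v = 0 :=
      SimpleGraph.dist_eq_zero_iff_eq_or_not_reachable.mpr (Or.inr h)
    omega
  obtain ⟨p0, hp0len⟩ := hreach.exists_walk_length_eq_dist
  set p := p0.bypass with hpdef
  have hppath : p.IsPath := p0.bypass_isPath
  have hplen : p.length = d := by
    have h1 : p.length ≤ p0.length := p0.length_bypass_le
    have h2 : d ≤ p.length := SimpleGraph.dist_le p
    have h3 : p0.length = d := hp0len
    omega
  have hlenpos : 0 < p.length := by omega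
  set w := p.getVert 1 with hwdef
  have hadjuw : G.Adj u w := by
    have := p.adj_getVert_succ hlenpos
    simpa using this
  have hwu : w ≠ u := fun h => G.irrefl (h ▸ hadjuw)
  have hwv : w ≠ v := fun h => huv (h ▸ hadjuw)
  have hwsup : w ∈ p.support :=
    SimpleGraph.Walk.mem_support_iff_exists_getVert.mpr ⟨1, rfl, by omega⟩
  refine ⟨w, hwu, hwv, ?_⟩
  set L := g - d with hLdef
  have hL1 : 1 ≤ L := by omega
  have hmain : ∀ q : G.Walk u v, q.IsPath → w ∉ q.support → L ≤ q.length := by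
    intro q hq hwq
    have hne : p ≠ q := fun h => hwq (h ▸ hwsup)
    obtain ⟨x, c, hc, hsub⟩ :=
      SimpleGraph.aux_exists_cycle_of_two_paths p q hppath hq hne
    have h1 : g ≤ c.length := hcycle x c hc
    have h2 : c.length ≤ p.length + q.length :=
      SimpleGraph.aux_cycle_length_le hne_uv hppath hq hc hsub
    omega
  set N := Fintype.card V with hNdef
  have hincl : {ω | v ∈ G.infected X u ω ∧ w ∉ G.infected X u ω} ⊆
      ⋃ ℓ ∈ Finset.Ico L N, ⋃ q : {q : G.Walk u v // q.IsPath ∧ q.length = ℓ},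
        {ω | q.1.Active X ω} := by
    rintro ω ⟨hv, hw⟩
    rcases hv with h | ⟨q, hq, hact⟩
    · exact (hne_uv h.symm).elim
    have hwq : w ∉ q.support := by
      intro hmem
      exact hw (Or.inr ⟨q.takeUntil w hmem, hq.takeUntil hmem,
        fun dd hdd => hact dd (q.darts_takeUntil_subset hmem hdd)⟩)
    have hlen : L ≤ q.length := hmain q hq hwq
    have hlt : q.length < N := hq.length_lt
    refine Set.mem_biUnion (Finset.mem_Ico.mpr ⟨hlen, hlt⟩) ?_
    exact Set.mem_iUnion.mpr ⟨⟨q, hq, rfl⟩, hact⟩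
  set r := ρ * (1 - Δ) with hrdef
  have h1Δ : (0:ℝ) < 1 - Δ := by linarith
  have hr0 : (0:ℝ) ≤ r := le_of_lt (mul_pos (by linarith) h1Δ)
  have hr1 : r < 1 := by
    rw [lt_div_iff₀ h1Δ] at hρΔ; linarith [hρΔ]
  have hinner : ∀ ℓ ∈ Finset.Ico L N,
      (∑ q : {q : G.Walk u v // q.IsPath ∧ q.length = ℓ},
        ℙ {ω | q.1.Active X ω})
        ≤ ENNReal.ofReal (r ^ ℓ) := by
    intro ℓ hℓ
    have hℓ1 : 1 ≤ ℓ := le_trans hL1 (Finset.mem_Ico.mp hℓ).1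
    have hcardle : ((Fintype.card {q : G.Walk u v // q.IsPath ∧ q.length = ℓ} : ℕ) : ℝ)
        ≤ ρ ^ ℓ := by
      have := hpaths ℓ hℓ1 u v
      rwa [Nat.card_eq_fintype_card] at this
    calc (∑ q : {q : G.Walk u v // q.IsPath ∧ q.length = ℓ},
          ℙ {ω | q.1.Active X ω})
        ≤ ∑ _q : {q : G.Walk u v // q.IsPath ∧ q.length = ℓ},
            ENNReal.ofReal (1 - Δ) ^ ℓ := by
          refine Finset.sum_le_sum fun q _ => ?_
          have := aux_prob_active_le Δ X hindep (fun a b' hab => (hbounds a b' hab).2)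
            q.1 q.2.1
          rwa [q.2.2] at this
      _ = (Fintype.card {q : G.Walk u v // q.IsPath ∧ q.length = ℓ} : ENNReal)
            * ENNReal.ofReal (1 - Δ) ^ ℓ := by
          rw [Finset.sum_const, Finset.card_univ, nsmul_eq_mul]
      _ ≤ ENNReal.ofReal (ρ ^ ℓ) * ENNReal.ofReal ((1 - Δ) ^ ℓ) := by
          refine mul_le_mul' ?_ ?_
          · rw [← ENNReal.ofReal_natCast]
            exact ENNReal.ofReal_le_ofReal hcardle
          · rw [ENNReal.ofReal_pow (by linarith)]
      _ = ENNReal.ofReal (r ^ ℓ) := by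
          rw [← ENNReal.ofReal_mul (by positivity), hrdef, mul_pow]
  have hceil : (⌈(2 * Real.logb b (Δ / 2) + Real.logb b (1 - r)) /
        Real.logb b r⌉ : ℤ) ≤ (L : ℤ) := by
    have hLcast : (L : ℤ) = (g : ℤ) - (d : ℤ) := by
      rw [hLdef]; push_cast [Nat.cast_sub (by omega : d ≤ g)]; ring
    omega
  calc ℙ {ω | v ∈ G.infected X u ω ∧ w ∉ G.infected X u ω}
      ≤ ℙ (⋃ ℓ ∈ Finset.Ico L N, ⋃ q : {q : G.Walk u v // q.IsPath ∧ q.length = ℓ},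
          {ω | q.1.Active X ω}) :=
        measure_mono hincl
    _ ≤ ∑ ℓ ∈ Finset.Ico L N, ℙ (⋃ q : {q : G.Walk u v // q.IsPath ∧ q.length = ℓ},
          {ω | q.1.Active X ω}) :=
        measure_biUnion_finset_le _ _
    _ ≤ ∑ ℓ ∈ Finset.Ico L N, ∑ q : {q : G.Walk u v // q.IsPath ∧ q.length = ℓ},
          ℙ {ω | q.1.Active X ω} :=
        Finset.sum_le_sum fun ℓ _ => measure_iUnion_fintype_le _ _
    _ ≤ ∑ ℓ ∈ Finset.Ico L N, ENNReal.ofReal (r ^ ℓ) := Finset.sum_le_sum hinner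
    _ = ENNReal.ofReal (∑ ℓ ∈ Finset.Ico L N, r ^ ℓ) :=
        (ENNReal.ofReal_sum_of_nonneg fun ℓ _ => by positivity).symm
    _ ≤ ENNReal.ofReal (Δ ^ 2 / 4) := by
        refine ENNReal.ofReal_le_ofReal ?_
        refine le_trans (aux_sum_geom r hr0 hr1 L N) ?_
        exact aux_geom_bound Δ ρ b hΔ0 hΔ2 hρ1 hρΔ hb L hceil
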